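/- Let f ∈ C¹(ℝ) be non-decreasing, let R > 0, ε > 0, and let M_f = max_{|ξ|≤R} |f(ξ)| and M_{f'} = max_{|ξ|≤R} |f'(ξ)|. Then for all a, b, c ∈ [-R, R] with |a-b| ≥ ε and |c-b| ≥ ε, | (f(a)-f(b))/(a-b) - (f(c)-f(b))/(c-b) | ≤ (2/ε²)·(M_f + R·M_{f'})·|a - c|. -/

import Mathlib

theorem stmt13 (f : ℝ → ℝ) (hf : ContDiff ℝ 1 f) (hmono : Monotone f)
    (R ε Mf Mf' : ℝ) (hR : 0 < R) (hε : 0 < ε)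
    (hMf : ∀ ξ : ℝ, |ξ| ≤ R → |f ξ| ≤ Mf)
    (hMf' : ∀ ξ : ℝ, |ξ| ≤ R → |deriv f ξ| ≤ Mf')
    (a b c : ℝ) (ha : a ∈ Set.Icc (-R) R) (hb : b ∈ Set.Icc (-R) R)
    (hc : c ∈ Set.Icc (-R) R) (hab : ε ≤ |a - b|) (hcb : ε ≤ |c - b|) :
    |(f a - f b) / (a - b) - (f c - f b) / (c - b)| ≤
      2 / ε ^ 2 * (Mf + R * Mf') * |a - c| := by
  have hMf0 : 0 ≤ Mf := le_trans (abs_nonneg _) (hMf 0 (by simpa using hR.le))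
  have hMf'0 : 0 ≤ Mf' := le_trans (abs_nonneg _) (hMf' 0 (by simpa using hR.le))
  have habs : ∀ x ∈ Set.Icc (-R) R, |x| ≤ R := fun x hx => abs_le.2 ⟨hx.1, hx.2⟩
  have habpos : (0:ℝ) < |a - b| := lt_of_lt_of_le hε hab
  have hcbpos : (0:ℝ) < |c - b| := lt_of_lt_of_le hε hcb
  have hab0 : a - b ≠ 0 := fun h => by simp [h] at habpos
  have hcb0 : c - b ≠ 0 := fun h => by simp [h] at hcbpos
  -- Lipschitz bound on [-R, R]
  have hlip : |f a - f c| ≤ Mf' * |a - c| := by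
    have := Convex.norm_image_sub_le_of_norm_deriv_le
      (f := f) (s := Set.Icc (-R) R) (C := Mf')
      (fun x _ => (hf.differentiable one_ne_zero).differentiableAt)
      (fun x hx => by simpa using hMf' x (habs x hx))
      (convex_Icc _ _) hc ha
    simpa [Real.norm_eq_abs] using this
  have hfb : |f c - f b| ≤ 2 * Mf := by
    have h1 := hMf c (habs c hc)
    have h2 := hMf b (habs b hb)
    calc |f c - f b| ≤ |f c| + |f b| := abs_sub _ _
      _ ≤ 2 * Mf := by linarith
  have hε2R : ε ≤ 2 * R := by
    have h1 := habs a ha; have h2 := habs b hb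
    have : |a - b| ≤ 2 * R := by
      calc |a - b| ≤ |a| + |b| := abs_sub a b
        _ ≤ 2 * R := by linarith
    linarith
  -- key identity
  have hid : (f a - f b) / (a - b) - (f c - f b) / (c - b)
      = (f a - f c) / (a - b) + (f c - f b) * (c - a) / ((a - b) * (c - b)) := by
    field_simp
    ring
  have hε2 : (0:ℝ) < ε ^ 2 := by positivity
  have t1 : |(f a - f c) / (a - b)| ≤ 2 * R * Mf' * |a - c| / ε ^ 2 := by
    rw [abs_div]
    calc |f a - f c| / |a - b| ≤ Mf' * |a - c| / ε :=
        div_le_div₀ (by positivity) hlip hε hab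
      _ ≤ 2 * R * Mf' * |a - c| / ε ^ 2 := by
        rw [div_le_div_iff₀ hε hε2]
        nlinarith [mul_le_mul_of_nonneg_left hε2R (mul_nonneg (mul_nonneg hMf'0 (abs_nonneg (a - c))) hε.le)]
  have t2 : |(f c - f b) * (c - a) / ((a - b) * (c - b))| ≤ 2 * Mf * |a - c| / ε ^ 2 := by
    rw [abs_div, abs_mul, abs_mul]
    have hnum : |f c - f b| * |c - a| ≤ 2 * Mf * |a - c| := by
      rw [show |c - a| = |a - c| by rw [abs_sub_comm]]
      exact mul_le_mul_of_nonneg_right hfb (abs_nonneg _)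
    have hden : ε ^ 2 ≤ |a - b| * |c - b| := by
      calc ε ^ 2 = ε * ε := sq ε
        _ ≤ |a - b| * |c - b| := mul_le_mul hab hcb hε.le (abs_nonneg _)
    exact div_le_div₀ (by positivity) hnum hε2 hden
  calc |(f a - f b) / (a - b) - (f c - f b) / (c - b)|
      = |(f a - f c) / (a - b) + (f c - f b) * (c - a) / ((a - b) * (c - b))| := by rw [hid]
    _ ≤ |(f a - f c) / (a - b)| + |(f c - f b) * (c - a) / ((a - b) * (c - b))| := abs_add_le _ _
    _ ≤ 2 * R * Mf' * |a - c| / ε ^ 2 + 2 * Mf * |a - c| / ε ^ 2 := add_le_add t1 t2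
    _ = 2 / ε ^ 2 * (Mf + R * Mf') * |a - c| := by field_simp; ring
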